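/- Let M be a common sufficient adjustment set, i.e., E(Y_t^0 | A, M) = E(Y_t^0 | M) a.s. for t = 0, 1. If additive homogeneous confounding holds, i.e., E(Y1^0 - Y0^0 | M) = E(Y1^0 - Y0^0) a.s., then parallel trends holds: E(Y1^0 - Y0^0 | A) = E(Y1^0 - Y0^0) a.s. -/

import Mathlib

open MeasureTheory

/-- If `M` is a common sufficient adjustment set,
`E(Y_t^0 | A, M) = E(Y_t^0 | M)` a.s. for `t = 0,1`, and additive homogeneous
confounding holds, `E(Y1^0 - Y0^0 | M) = E(Y1^0 - Y0^0)` a.s., then parallel trends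
holds: `E(Y1^0 - Y0^0 | A) = E(Y1^0 - Y0^0)` a.s. -/
theorem stmt_4 {Ω : Type*} [MeasurableSpace Ω] {β : Type*} [MeasurableSpace β]
    (μ : Measure Ω) [IsProbabilityMeasure μ]
    (A Y0 Y1 : Ω → ℝ) (M : Ω → β)
    (hAmeas : Measurable A) (hAbin : ∀ ω, A ω = 0 ∨ A ω = 1) (hMmeas : Measurable M)
    (hY0 : Integrable Y0 μ) (hY1 : Integrable Y1 μ)
    (hsuff0 : μ[Y0 | MeasurableSpace.comap (fun ω => (A ω, M ω)) inferInstance]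
        =ᵐ[μ] μ[Y0 | MeasurableSpace.comap M inferInstance])
    (hsuff1 : μ[Y1 | MeasurableSpace.comap (fun ω => (A ω, M ω)) inferInstance]
        =ᵐ[μ] μ[Y1 | MeasurableSpace.comap M inferInstance])
    (hAHC : μ[fun ω => Y1 ω - Y0 ω | MeasurableSpace.comap M inferInstance]
        =ᵐ[μ] fun _ => ∫ ω, (Y1 ω - Y0 ω) ∂μ) :
    μ[fun ω => Y1 ω - Y0 ω | MeasurableSpace.comap A inferInstance]
        =ᵐ[μ] fun _ => ∫ ω, (Y1 ω - Y0 ω) ∂μ := by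
  have hAMmeas : Measurable (fun ω => (A ω, M ω)) := hAmeas.prodMk hMmeas
  have hAM_le : MeasurableSpace.comap (fun ω => (A ω, M ω)) inferInstance
      ≤ ‹MeasurableSpace Ω› := hAMmeas.comap_le
  have hA_le : MeasurableSpace.comap A inferInstance ≤ ‹MeasurableSpace Ω› :=
    hAmeas.comap_le
  have hA_le_AM : MeasurableSpace.comap A inferInstance
      ≤ MeasurableSpace.comap (fun ω => (A ω, M ω)) inferInstance := by
    have h : A = Prod.fst ∘ (fun ω => (A ω, M ω)) := rfl
    calc MeasurableSpace.comap A inferInstance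
        = MeasurableSpace.comap (fun ω => (A ω, M ω))
            (MeasurableSpace.comap Prod.fst inferInstance) := by
          rw [MeasurableSpace.comap_comp, ← h]
      _ ≤ _ := MeasurableSpace.comap_mono measurable_fst.comap_le
  have hsub : μ[fun ω => Y1 ω - Y0 ω | MeasurableSpace.comap (fun ω => (A ω, M ω)) inferInstance]
      =ᵐ[μ] fun ω => (μ[Y1 | MeasurableSpace.comap (fun ω => (A ω, M ω)) inferInstance]) ω
        - (μ[Y0 | MeasurableSpace.comap (fun ω => (A ω, M ω)) inferInstance]) ω :=
    condExp_sub hY1 hY0 _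
  have hsubM : μ[fun ω => Y1 ω - Y0 ω | MeasurableSpace.comap M inferInstance]
      =ᵐ[μ] fun ω => (μ[Y1 | MeasurableSpace.comap M inferInstance]) ω
        - (μ[Y0 | MeasurableSpace.comap M inferInstance]) ω :=
    condExp_sub hY1 hY0 _
  have hconstAM : μ[fun ω => Y1 ω - Y0 ω | MeasurableSpace.comap (fun ω => (A ω, M ω)) inferInstance]
      =ᵐ[μ] fun _ => ∫ ω, (Y1 ω - Y0 ω) ∂μ :=
    hsub.trans ((hsuff1.sub hsuff0).trans (hsubM.symm.trans hAHC))
  have htower : μ[μ[fun ω => Y1 ω - Y0 ω | MeasurableSpace.comap (fun ω => (A ω, M ω)) inferInstance]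
        | MeasurableSpace.comap A inferInstance]
      =ᵐ[μ] μ[fun ω => Y1 ω - Y0 ω | MeasurableSpace.comap A inferInstance] :=
    condExp_condExp_of_le hA_le_AM hAM_le
  calc μ[fun ω => Y1 ω - Y0 ω | MeasurableSpace.comap A inferInstance]
      =ᵐ[μ] μ[μ[fun ω => Y1 ω - Y0 ω | MeasurableSpace.comap (fun ω => (A ω, M ω)) inferInstance]
        | MeasurableSpace.comap A inferInstance] := htower.symm
    _ =ᵐ[μ] μ[(fun _ => ∫ ω, (Y1 ω - Y0 ω) ∂μ : Ω → ℝ) | MeasurableSpace.comap A inferInstance] :=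
        condExp_congr_ae hconstAM
    _ =ᵐ[μ] fun _ => ∫ ω, (Y1 ω - Y0 ω) ∂μ :=
        Filter.EventuallyEq.of_eq (condExp_const (μ := μ) hA_le _)
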